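/- Let N = (V, A, c) be a network and X ⊆ V. Then the full flow vitality group centrality φ^N(X) := Σ over arcs (y,z) ∈ A with φ^N_{yz} > 0 of φ^N_{yz}(X)/φ^N_{yz} and the full flow betweenness group centrality λ^N(X) := Σ over arcs (y,z) ∈ A with φ^N_{yz} > 0 of λ^N_{yz}(X)/φ^N_{yz} satisfy φ^N(X) ≤ λ^N(X); moreover, when X = {x} is a singleton, φ^N(x) = λ^N(x). -/

import Mathlib

/-!
Networks on the complete digraph: capacities `c : V → V → ℕ` with no loops
(arcs are ordered pairs of distinct vertices; loops are given capacity 0).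
-/

structure Network (V : Type*) where
  c : V → V → ℕ
  no_loop : ∀ v, c v v = 0

namespace NetFlow

variable {V : Type*} [Fintype V] [DecidableEq V]

/-- `f` is a flow from `y` to `z` in `N`. -/
def IsFlow (N : Network V) (y z : V) (f : V → V → ℕ) : Prop :=
  (∀ u v, f u v ≤ N.c u v) ∧
  (∀ x, x ≠ y → x ≠ z → ∑ u, f u x = ∑ u, f x u)

/-- The value of a flow from `y`. -/
def flowValue (f : V → V → ℕ) (y : V) : ℤ :=
  (∑ u, (f y u : ℤ)) - ∑ u, (f u y : ℤ)

/-- The maximum flow value `φ^N_{yz}`. -/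
noncomputable def maxFlowValue (N : Network V) (y z : V) : ℕ :=
  sSup {m : ℕ | ∃ f, IsFlow N y z f ∧ flowValue f y = (m : ℤ)}

/-- `f` is a maximum flow from `y` to `z` in `N`. -/
def IsMaxFlow (N : Network V) (y z : V) (f : V → V → ℕ) : Prop :=
  IsFlow N y z f ∧ flowValue f y = (maxFlowValue N y z : ℤ)

/-- The network `N_X`: capacities of arcs incident to `X` are set to zero. -/
def removeVerts (N : Network V) (X : Finset V) : Network V where
  c u v := if u ∈ X ∨ v ∈ X then 0 else N.c u v
  no_loop v := by simp [N.no_loop v]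

/-- `φ^N_{yz}(X) = φ^N_{yz} - φ^{N_X}_{yz}`. -/
noncomputable def phiDrop (N : Network V) (y z : V) (X : Finset V) : ℤ :=
  (maxFlowValue N y z : ℤ) - (maxFlowValue (removeVerts N X) y z : ℤ)

/-- The (consecutive) arcs of a list of vertices. -/
def pathArcs (p : List V) : List (V × V) := p.zip p.tail

/-- `p` is a path from `y` to `z` in `N`: at least two distinct vertices, starting at `y`,
ending at `z`, with all consecutive arcs of positive capacity. -/
def IsPath (N : Network V) (y z : V) (p : List V) : Prop :=
  2 ≤ p.length ∧ p.Nodup ∧ p.head? = some y ∧ p.getLast? = some z ∧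
    p.Chain' fun u v => 1 ≤ N.c u v

/-- `p` is a cycle in `N`. -/
def IsCycle (N : Network V) (p : List V) : Prop :=
  3 ≤ p.length ∧ p.dropLast.Nodup ∧ p.head? = p.getLast? ∧
    p.Chain' fun u v => 1 ≤ N.c u v

/-- A sequence of arc-disjoint paths from `y` to `z` in `N`: each component is a path, and
each arc `a` is used by at most `c a` components. -/
def IsPathSeq (N : Network V) (y z : V) (γ : List (List V)) : Prop :=
  (∀ p ∈ γ, IsPath N y z p) ∧
  ∀ u v : V, γ.countP (fun p => decide ((u, v) ∈ pathArcs p)) ≤ N.c u v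

/-- `λ^N_{yz}`: the maximum length of a sequence of arc-disjoint paths from `y` to `z`. -/
noncomputable def maxSeqLen (N : Network V) (y z : V) : ℕ :=
  sSup {m : ℕ | ∃ γ : List (List V), IsPathSeq N y z γ ∧ γ.length = m}

/-- `M^N_{yz}`: the sequences of arc-disjoint paths from `y` to `z` of maximum length. -/
def MaxSeqs (N : Network V) (y z : V) : Set (List (List V)) :=
  {γ | IsPathSeq N y z γ ∧ γ.length = maxSeqLen N y z}

/-- `l_X(γ)`: the number of components of `γ` having a vertex in `X`. -/
def lX (X : Finset V) (γ : List (List V)) : ℕ :=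
  γ.countP fun p => p.any fun x => decide (x ∈ X)

/-- `λ^N_{yz}(X)`: the minimum of `l_X` over maximum-length sequences of arc-disjoint paths. -/
noncomputable def lambdaX (N : Network V) (y z : V) (X : Finset V) : ℕ :=
  sInf {n : ℕ | ∃ γ ∈ MaxSeqs N y z, lX X γ = n}

/-- The flow through a vertex: `f(x) = Σ_{a exiting x} f(a)` if `x ∉ {y,z}`, `v(f)` otherwise. -/
def vertexFlow (f : V → V → ℕ) (y z x : V) : ℤ :=
  if x = y ∨ x = z then flowValue f y else ∑ u, (f x u : ℤ)

/-- `δ^N_{yz}(X)`: the minimum of `f(X) = Σ_{x∈X} f(x)` over maximum flows `f`. -/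
noncomputable def deltaX (N : Network V) (y z : V) (X : Finset V) : ℕ :=
  sInf {n : ℕ | ∃ f, IsMaxFlow N y z f ∧ (∑ x ∈ X, vertexFlow f y z x) = (n : ℤ)}

/-- The flow `f_γ` associated with a sequence of arc-disjoint paths. -/
def seqFlow (γ : List (List V)) (u v : V) : ℕ :=
  γ.countP fun p => decide ((u, v) ∈ pathArcs p)

/-- The path (or cycle) function `χ_p` of a path or cycle `p`. -/
def chi (p : List V) (u v : V) : ℕ := (pathArcs p).count (u, v)

/-- `(γ, w)` is a decomposition of the flow `f`: `γ` is a sequence of `v(f)` paths from `y`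
to `z`, `w` a sequence of cycles, and `f = Σ_j χ_{γ_j} + Σ_j χ_{w_j}`. -/
def IsDecomposition (N : Network V) (y z : V) (f : V → V → ℕ)
    (γ w : List (List V)) : Prop :=
  (∀ p ∈ γ, IsPath N y z p) ∧ (∀ q ∈ w, IsCycle N q) ∧
  (γ.length : ℤ) = flowValue f y ∧
  ∀ u v : V, f u v = (γ.map fun p => chi p u v).sum + (w.map fun q => chi q u v).sum

/-- The forward arcs of a generalized path given by vertices `p` and directions `d`. -/
def forwardArcs (p : List V) (d : List Bool) : List (V × V) :=
  ((p.zip p.tail).zip d).filterMap fun e => if e.2 then some e.1 else none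

/-- The backward arcs of a generalized path given by vertices `p` and directions `d`. -/
def backwardArcs (p : List V) (d : List Bool) : List (V × V) :=
  ((p.zip p.tail).zip d).filterMap fun e => if e.2 then none else some (e.1.2, e.1.1)

/-- `(p, d)` is a generalized path from `y` to `z`: distinct vertices `x_1 = y, …, x_m = z`
(`m ≥ 2`), the `i`-th arc being `(x_i, x_{i+1})` (forward, `d_i = true`) or `(x_{i+1}, x_i)`
(backward, `d_i = false`). -/
def IsGenPath (y z : V) (p : List V) (d : List Bool) : Prop :=
  2 ≤ p.length ∧ p.Nodup ∧ p.head? = some y ∧ p.getLast? = some z ∧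
    d.length + 1 = p.length

/-- `(p, d)` is an augmenting path for `f` from `y` to `z` in `N`. -/
def IsAugPath (N : Network V) (y z : V) (f : V → V → ℕ)
    (p : List V) (d : List Bool) : Prop :=
  IsGenPath y z p d ∧
  (∀ a ∈ forwardArcs p d, f a.1 a.2 < N.c a.1 a.2) ∧
  (∀ a ∈ backwardArcs p d, 1 ≤ f a.1 a.2)

/-- `χ_σ` for a generalized path `σ = (p, d)`: `+1` on forward arcs, `-1` on backward arcs. -/
def chiGen (p : List V) (d : List Bool) (u v : V) : ℤ :=
  ((forwardArcs p d).count (u, v) : ℤ) - ((backwardArcs p d).count (u, v) : ℤ)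

/-- The full flow vitality group centrality measure `φ^N(X)`. -/
noncomputable def phiGC (N : Network V) (X : Finset V) : ℝ :=
  ∑ a ∈ Finset.univ.filter (fun a : V × V => a.1 ≠ a.2 ∧ 0 < maxFlowValue N a.1 a.2),
    (phiDrop N a.1 a.2 X : ℝ) / (maxFlowValue N a.1 a.2 : ℝ)

/-- The full flow betweenness group centrality measure `λ^N(X)`. -/
noncomputable def lambdaGC (N : Network V) (X : Finset V) : ℝ :=
  ∑ a ∈ Finset.univ.filter (fun a : V × V => a.1 ≠ a.2 ∧ 0 < maxFlowValue N a.1 a.2),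
    (lambdaX N a.1 a.2 X : ℝ) / (maxFlowValue N a.1 a.2 : ℝ)

end NetFlow


namespace NetFlow
set_option linter.unusedSectionVars false
set_option maxHeartbeats 1000000
open List
variable {V : Type*} [Fintype V] [DecidableEq V]

lemma shorten {α : Type*} {r : α → α → Prop} :
    ∀ p : List α, p.Chain' r → ¬ p.Nodup →
    ∃ q : List α, q.length < p.length ∧ q.Chain' r ∧ q.head? = p.head? ∧
      q.getLast? = p.getLast? := by
  intro p
  induction p with
  | nil => intro _ h; exact absurd List.nodup_nil h
  | cons a t ih =>
    intro hc hnd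
    by_cases ha : a ∈ t
    · obtain ⟨s, u, rfl⟩ := List.append_of_mem ha
      refine ⟨a :: u, ?_, ?_, rfl, ?_⟩
      · simp
      · exact hc.suffix ⟨a :: s, by simp⟩
      · show _ = ((a :: s) ++ a :: u).getLast?
        rw [List.getLast?_append_cons]
    · have hndt : ¬ t.Nodup := fun h => hnd (List.nodup_cons.2 ⟨ha, h⟩)
      have htne : t ≠ [] := by rintro rfl; exact hndt List.nodup_nil
      obtain ⟨q, hlen, hcq, hh, hl⟩ := ih (hc.suffix (List.suffix_cons a t)) hndt
      have hqne : q ≠ [] := by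
        rintro rfl
        rw [List.getLast?_eq_none_iff.2 rfl] at hl
        exact htne (List.getLast?_eq_none_iff.1 hl.symm)
      refine ⟨a :: q, by simpa using hlen, ?_, rfl, ?_⟩
      · rw [List.Chain', List.isChain_cons]
        refine ⟨fun b hb => (List.isChain_cons.1 hc).1 b (hh ▸ hb), hcq⟩
      · obtain ⟨b, q', rfl⟩ := List.exists_cons_of_ne_nil hqne
        obtain ⟨c, t', rfl⟩ := List.exists_cons_of_ne_nil htne
        rw [List.getLast?_cons_cons, List.getLast?_cons_cons]
        exact hl

lemma exists_nodup_chain' {α : Type*} {r : α → α → Prop} {y z : α}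
    (h : Relation.ReflTransGen r y z) (hyz : y ≠ z) :
    ∃ p : List α, 2 ≤ p.length ∧ p.Nodup ∧ p.head? = some y ∧ p.getLast? = some z ∧
      p.Chain' r := by
  obtain ⟨l, hl, hlast⟩ := List.exists_isChain_cons_of_relationReflTransGen h
  have : ∃ p : List α, p.Chain' r ∧ p.head? = some y ∧ p.getLast? = some z := by
    refine ⟨y :: l, ?_, rfl, ?_⟩
    · exact hl
    · rw [List.getLast?_eq_getLast (List.cons_ne_nil _ _), hlast]
  clear hl hlast l
  obtain ⟨p, hc, hh, hl⟩ := this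
  generalize hn : p.length = n
  induction n using Nat.strong_induction_on generalizing p with
  | _ n ih =>
    by_cases hnd : p.Nodup
    · refine ⟨p, ?_, hnd, hh, hl, hc⟩
      match p, hh, hl with
      | [a], hh, hl =>
        simp only [List.head?_cons, Option.some.injEq] at hh
        simp only [List.getLast?_singleton, Option.some.injEq] at hl
        exact absurd (hh.symm.trans hl) hyz
      | a :: b :: t, _, _ => simp
    · obtain ⟨q, hql, hqc, hqh, hqlast⟩ := shorten p hc hnd
      exact ih q.length (hn ▸ hql) q hqc (hqh.trans hh) (hqlast.trans hl) rfl

lemma pathArcs_cons_cons (a b : V) (t : List V) :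
    pathArcs (a :: b :: t) = (a, b) :: pathArcs (b :: t) := rfl

lemma pathArcs_nil : pathArcs ([] : List V) = [] := rfl
lemma pathArcs_singleton (a : V) : pathArcs [a] = [] := rfl

lemma chain'_iff_pathArcs {r : V → V → Prop} : ∀ {p : List V},
    p.Chain' r ↔ ∀ a ∈ pathArcs p, r a.1 a.2
  | [] => by simp [pathArcs_nil, List.Chain', List.isChain_nil]
  | [a] => by simp [pathArcs_singleton, List.Chain', List.isChain_singleton]
  | a :: b :: t => by
      rw [show List.Chain' r (a :: b :: t) ↔ r a b ∧ List.Chain' r (b :: t) from List.isChain_cons_cons, chain'_iff_pathArcs (p := b :: t)]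
      simp [pathArcs_cons_cons]

lemma mem_of_mem_pathArcs {p : List V} {u v : V} (h : (u, v) ∈ pathArcs p) :
    u ∈ p ∧ v ∈ p.tail :=
  ⟨(List.of_mem_zip h).1, (List.of_mem_zip h).2⟩

lemma pathArcs_nodup : ∀ {p : List V}, p.Nodup → (pathArcs p).Nodup
  | [] , _ => by simp [pathArcs_nil]
  | [a], _ => by simp [pathArcs_singleton]
  | a :: b :: t, h => by
      rw [pathArcs_cons_cons, List.nodup_cons]
      refine ⟨fun hmem => ?_, pathArcs_nodup (List.nodup_cons.1 h).2⟩
      exact (List.nodup_cons.1 h).1 (mem_of_mem_pathArcs hmem).1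
  termination_by p => p.length

lemma pathArcs_fst_unique : ∀ {p : List V}, p.Nodup → ∀ (x u u' : V),
    (x, u) ∈ pathArcs p → (x, u') ∈ pathArcs p → u = u'
  | [], _ => by simp [pathArcs_nil]
  | [a], _ => by simp [pathArcs_singleton]
  | a :: b :: t, h => by
      intro x u u' h1 h2
      rw [pathArcs_cons_cons, List.mem_cons] at h1 h2
      have hnd := List.nodup_cons.1 h
      rcases h1 with h1 | h1 <;> rcases h2 with h2 | h2
      · rw [Prod.mk.injEq] at h1 h2
        rw [h1.2, h2.2]
      · rw [Prod.mk.injEq] at h1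
        exact absurd (h1.1 ▸ (mem_of_mem_pathArcs h2).1) hnd.1
      · rw [Prod.mk.injEq] at h2
        exact absurd (h2.1 ▸ (mem_of_mem_pathArcs h1).1) hnd.1
      · exact pathArcs_fst_unique hnd.2 x u u' h1 h2
  termination_by p => p.length

lemma pathArcs_snd_unique : ∀ {p : List V}, p.Nodup → ∀ (x u u' : V),
    (u, x) ∈ pathArcs p → (u', x) ∈ pathArcs p → u = u'
  | [], _ => by simp [pathArcs_nil]
  | [a], _ => by simp [pathArcs_singleton]
  | a :: b :: t, h => by
      intro x u u' h1 h2
      rw [pathArcs_cons_cons, List.mem_cons] at h1 h2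
      have hnd := List.nodup_cons.1 h
      have hndt := List.nodup_cons.1 hnd.2
      rcases h1 with h1 | h1 <;> rcases h2 with h2 | h2
      · rw [Prod.mk.injEq] at h1 h2
        rw [h1.1, h2.1]
      · rw [Prod.mk.injEq] at h1
        exact absurd (h1.2 ▸ (mem_of_mem_pathArcs h2).2) hndt.1
      · rw [Prod.mk.injEq] at h2
        exact absurd (h2.2 ▸ (mem_of_mem_pathArcs h1).2) hndt.1
      · exact pathArcs_snd_unique hnd.2 x u u' h1 h2
  termination_by p => p.length

lemma pathArcs_no_reverse : ∀ {p : List V}, p.Nodup → ∀ (u v : V),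
    (u, v) ∈ pathArcs p → (v, u) ∈ pathArcs p → False
  | [], _ => by simp [pathArcs_nil]
  | [a], _ => by simp [pathArcs_singleton]
  | a :: b :: t, h => by
      intro u v h1 h2
      rw [pathArcs_cons_cons, List.mem_cons] at h1 h2
      have hnd := List.nodup_cons.1 h
      rcases h1 with h1 | h1 <;> rcases h2 with h2 | h2
      · rw [Prod.mk.injEq] at h1 h2
        exact hnd.1 (h1.1 ▸ h2.2 ▸ List.mem_cons_self)
      · rw [Prod.mk.injEq] at h1
        obtain ⟨rfl, rfl⟩ := h1
        exact hnd.1 (List.mem_cons_of_mem _ (mem_of_mem_pathArcs h2).2)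
      · rw [Prod.mk.injEq] at h2
        obtain ⟨rfl, rfl⟩ := h2
        exact hnd.1 (List.mem_cons_of_mem _ (mem_of_mem_pathArcs h1).2)
      · exact pathArcs_no_reverse hnd.2 u v h1 h2
  termination_by p => p.length

lemma sum_ind_fst (a b x : V) :
    (∑ u, if (a, b) = (x, u) then (1 : ℤ) else 0) = if a = x then 1 else 0 := by
  simp only [Prod.mk.injEq, ite_and]
  by_cases hx : a = x <;> simp [hx]

lemma sum_ind_snd (a b x : V) :
    (∑ u, if (a, b) = (u, x) then (1 : ℤ) else 0) = if b = x then 1 else 0 := by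
  simp only [Prod.mk.injEq, ite_and]
  by_cases hx : b = x <;> simp [hx]

lemma div_chi : ∀ (p : List V) (x : V),
    ((∑ u, (chi p x u : ℤ)) - ∑ u, (chi p u x : ℤ)) =
      (if p.head? = some x then 1 else 0) - (if p.getLast? = some x then 1 else 0)
  | [], x => by simp [chi, pathArcs_nil]
  | [a], x => by simp [chi, pathArcs_singleton]
  | a :: b :: t, x => by
      have IH := div_chi (b :: t) x
      have hc : ∀ u v : V, (chi (a :: b :: t) u v : ℤ) =
          chi (b :: t) u v + if (a, b) = (u, v) then 1 else 0 := by
        intro u v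
        rw [chi, chi, pathArcs_cons_cons, List.count_cons]
        push_cast
        simp only [beq_iff_eq]
      simp only [hc]
      rw [Finset.sum_add_distrib, Finset.sum_add_distrib, sum_ind_fst, sum_ind_snd]
      have hhead : (a :: b :: t).head? = some a := rfl
      have hlast : (a :: b :: t).getLast? = (b :: t).getLast? := by
        rw [List.getLast?_cons_cons]
      rw [hhead, hlast]
      have hhead2 : (b :: t).head? = some b := rfl
      rw [hhead2] at IH
      simp only [Option.some.injEq] at IH ⊢
      by_cases h1 : a = x <;> by_cases h2 : b = x <;>
        simp only [h1, h2, if_true, if_false, ite_true, ite_false, eq_self_iff_true,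
          not_false_iff] at IH ⊢ <;>
        linarith [IH]

lemma pathArcs_cons_cons' (a b : V) (t : List V) :
    pathArcs (a :: b :: t) = (a, b) :: pathArcs (b :: t) := rfl

lemma forwardArcs_nil_d (p : List V) : forwardArcs p [] = [] := by
  simp [forwardArcs]

lemma backwardArcs_nil_d (p : List V) : backwardArcs p [] = [] := by
  simp [backwardArcs]

lemma forwardArcs_nil : forwardArcs ([] : List V) d = [] := by simp [forwardArcs]
lemma backwardArcs_nil : backwardArcs ([] : List V) d = [] := by simp [backwardArcs]
lemma forwardArcs_singleton (a : V) (d : List Bool) : forwardArcs [a] d = [] := by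
  simp [forwardArcs, pathArcs]
lemma backwardArcs_singleton (a : V) (d : List Bool) : backwardArcs [a] d = [] := by
  simp [backwardArcs, pathArcs]

lemma forwardArcs_cons_cons (a b : V) (t : List V) (e : Bool) (d : List Bool) :
    forwardArcs (a :: b :: t) (e :: d) =
      if e then (a, b) :: forwardArcs (b :: t) d else forwardArcs (b :: t) d := by
  cases e <;> simp [forwardArcs]

lemma backwardArcs_cons_cons (a b : V) (t : List V) (e : Bool) (d : List Bool) :
    backwardArcs (a :: b :: t) (e :: d) =
      if e then backwardArcs (b :: t) d else (b, a) :: backwardArcs (b :: t) d := by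
  cases e <;> simp [backwardArcs]

lemma forwardArcs_sublist : ∀ (p : List V) (d : List Bool),
    forwardArcs p d <+ pathArcs p
  | [], d => by simp [forwardArcs_nil, pathArcs]
  | [a], d => by simp [forwardArcs_singleton, pathArcs]
  | a :: b :: t, [] => by simp [forwardArcs_nil_d]
  | a :: b :: t, e :: d => by
      rw [forwardArcs_cons_cons, pathArcs_cons_cons']
      cases e
      · simpa using (forwardArcs_sublist (b :: t) d).cons (a, b)
      · simpa using (forwardArcs_sublist (b :: t) d).cons₂ (a, b)

lemma backwardArcs_swap_sublist : ∀ (p : List V) (d : List Bool),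
    (backwardArcs p d).map Prod.swap <+ pathArcs p
  | [], d => by simp [backwardArcs_nil, pathArcs]
  | [a], d => by simp [backwardArcs_singleton, pathArcs]
  | a :: b :: t, [] => by simp [backwardArcs_nil_d]
  | a :: b :: t, e :: d => by
      rw [backwardArcs_cons_cons, pathArcs_cons_cons']
      cases e
      · simpa [Prod.swap] using (backwardArcs_swap_sublist (b :: t) d).cons₂ (a, b)
      · simpa using (backwardArcs_swap_sublist (b :: t) d).cons (a, b)

lemma mem_pathArcs_of_mem_forwardArcs {p : List V} {d : List Bool} {a : V × V}
    (h : a ∈ forwardArcs p d) : a ∈ pathArcs p :=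
  (forwardArcs_sublist p d).mem h

lemma mem_pathArcs_of_mem_backwardArcs {p : List V} {d : List Bool} {a : V × V}
    (h : a ∈ backwardArcs p d) : (a.2, a.1) ∈ pathArcs p :=
  (backwardArcs_swap_sublist p d).mem (List.mem_map_of_mem (f := Prod.swap) h)

lemma sum_ind_fst' (a b x : V) :
    (∑ u, if (a, b) = (x, u) then (1 : ℤ) else 0) = if a = x then 1 else 0 := by
  simp only [Prod.mk.injEq, ite_and]
  by_cases hx : a = x <;> simp [hx]

lemma sum_ind_snd' (a b x : V) :
    (∑ u, if (a, b) = (u, x) then (1 : ℤ) else 0) = if b = x then 1 else 0 := by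
  simp only [Prod.mk.injEq, ite_and]
  by_cases hx : b = x <;> simp [hx]

lemma div_chiGen : ∀ (p : List V) (d : List Bool), p.length ≤ d.length + 1 → ∀ x : V,
    ((∑ u, chiGen p d x u) - ∑ u, chiGen p d u x) =
      (if p.head? = some x then 1 else 0) - (if p.getLast? = some x then 1 else 0)
  | [], d, _, x => by simp [chiGen, forwardArcs_nil, backwardArcs_nil]
  | [a], d, _, x => by simp [chiGen, forwardArcs_singleton, backwardArcs_singleton]
  | a :: b :: t, [], h, x => by simp at h
  | a :: b :: t, e :: d, h, x => by
      have IH := div_chiGen (b :: t) d (by simpa using h) x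
      have hc : ∀ u v : V, chiGen (a :: b :: t) (e :: d) u v =
          chiGen (b :: t) d u v +
            (if e then (if (a, b) = (u, v) then 1 else 0)
             else -(if (b, a) = (u, v) then 1 else 0)) := by
        intro u v
        rw [chiGen, chiGen, forwardArcs_cons_cons, backwardArcs_cons_cons]
        cases e <;>
          simp only [ite_true, ite_false, Bool.false_eq_true, List.count_cons] <;>
          push_cast <;> simp only [beq_iff_eq] <;> ring
      simp only [hc]
      rw [Finset.sum_add_distrib, Finset.sum_add_distrib]
      have hhead2 : (b :: t).head? = some b := rfl
      rw [hhead2] at IH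
      have hlast : (a :: b :: t).getLast? = (b :: t).getLast? := by
        rw [List.getLast?_cons_cons]
      have hhead : (a :: b :: t).head? = some a := rfl
      rw [hhead, hlast]
      simp only [Option.some.injEq] at IH ⊢
      cases e
      · simp only [if_false, Bool.false_eq_true, Finset.sum_neg_distrib]
        rw [sum_ind_fst' b a x, sum_ind_snd' b a x]
        by_cases h1 : a = x <;> by_cases h2 : b = x <;>
          simp only [h1, h2, if_true, if_false, ite_true, ite_false, eq_self_iff_true,
            not_false_iff] at IH ⊢ <;> linarith [IH]
      · simp only [if_true]
        rw [sum_ind_fst' a b x, sum_ind_snd' a b x]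
        by_cases h1 : a = x <;> by_cases h2 : b = x <;>
          simp only [h1, h2, if_true, if_false, ite_true, ite_false, eq_self_iff_true,
            not_false_iff] at IH ⊢ <;> linarith [IH]

lemma zero_isFlow (N : Network V) (y z : V) : IsFlow N y z (fun _ _ => 0) :=
  ⟨fun _ _ => Nat.zero_le _, fun _ _ _ => rfl⟩

lemma maxFlow_set_nonempty (N : Network V) (y z : V) :
    {m : ℕ | ∃ f, IsFlow N y z f ∧ flowValue f y = (m : ℤ)}.Nonempty :=
  ⟨0, fun _ _ => 0, zero_isFlow N y z, by simp [flowValue]⟩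

lemma maxFlow_set_bddAbove (N : Network V) (y z : V) :
    BddAbove {m : ℕ | ∃ f, IsFlow N y z f ∧ flowValue f y = (m : ℤ)} := by
  refine ⟨∑ u, N.c y u, fun m hm => ?_⟩
  obtain ⟨f, hf, hv⟩ := hm
  have h1 : (m : ℤ) ≤ ∑ u, (N.c y u : ℤ) := by
    rw [← hv, flowValue]
    have h2 : (∑ u, (f y u : ℤ)) ≤ ∑ u, (N.c y u : ℤ) :=
      Finset.sum_le_sum fun u _ => by exact_mod_cast hf.1 y u
    have h3 : (0 : ℤ) ≤ ∑ u, (f u y : ℤ) :=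
      Finset.sum_nonneg fun u _ => by positivity
    linarith
  have h4 : ((∑ u, N.c y u : ℕ) : ℤ) = ∑ u, (N.c y u : ℤ) := by push_cast; rfl
  rw [← h4] at h1
  exact_mod_cast h1

lemma exists_isMaxFlow (N : Network V) (y z : V) : ∃ f, IsMaxFlow N y z f := by
  have := Nat.sSup_mem (maxFlow_set_nonempty N y z) (maxFlow_set_bddAbove N y z)
  obtain ⟨f, hf, hv⟩ := this
  exact ⟨f, hf, hv⟩

lemma le_maxFlowValue {N : Network V} {y z : V} {f : V → V → ℕ} {m : ℕ}
    (hf : IsFlow N y z f) (hv : flowValue f y = (m : ℤ)) : m ≤ maxFlowValue N y z :=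
  le_csSup (maxFlow_set_bddAbove N y z) ⟨f, hf, hv⟩

lemma flowValue_eq_cut {N : Network V} {y z : V} {f : V → V → ℕ}
    (hf : IsFlow N y z f) (S : Finset V) (hy : y ∈ S) (hz : z ∉ S) :
    flowValue f y = ∑ u ∈ S, ∑ v ∈ Sᶜ, ((f u v : ℤ) - (f v u : ℤ)) := by
  have h1 : ∑ x ∈ S, ((∑ u, (f x u : ℤ)) - ∑ u, (f u x : ℤ)) = flowValue f y := by
    rw [Finset.sum_eq_single_of_mem y hy]
    · rfl
    · intro x hx hxy
      have hcons := hf.2 x hxy (by rintro rfl; exact hz hx)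
      have hcast : (∑ u, (f u x : ℤ)) = ∑ u, (f x u : ℤ) := by exact_mod_cast hcons
      omega
  rw [← h1]
  have expand : ∀ x ∈ S, ((∑ u, (f x u : ℤ)) - ∑ u, (f u x : ℤ)) =
      ((∑ u ∈ S, (f x u : ℤ)) - ∑ u ∈ S, (f u x : ℤ)) +
      ((∑ u ∈ Sᶜ, (f x u : ℤ)) - ∑ u ∈ Sᶜ, (f u x : ℤ)) := by
    intro x _
    rw [← Finset.sum_add_sum_compl S (fun u => (f x u : ℤ)),
        ← Finset.sum_add_sum_compl S (fun u => (f u x : ℤ))]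
    ring
  rw [Finset.sum_congr rfl expand, Finset.sum_add_distrib]
  have key : ∑ x ∈ S, ((∑ u ∈ S, (f x u : ℤ)) - ∑ u ∈ S, (f u x : ℤ)) = 0 := by
    rw [Finset.sum_sub_distrib]
    rw [show (∑ x ∈ S, ∑ u ∈ S, (f u x : ℤ)) = ∑ x ∈ S, ∑ u ∈ S, (f x u : ℤ) from
      Finset.sum_comm]
    exact sub_self _
  rw [key, zero_add]
  exact Finset.sum_congr rfl fun x _ => (Finset.sum_sub_distrib _ _).symm


lemma exists_pos_path {N : Network V} {y z : V} {f : V → V → ℕ}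
    (hf : IsFlow N y z f) (hyz : y ≠ z) (hpos : 0 < flowValue f y) :
    ∃ p : List V, 2 ≤ p.length ∧ p.Nodup ∧ p.head? = some y ∧ p.getLast? = some z ∧
      p.Chain' fun u v => 1 ≤ f u v := by
  classical
  have hreach : Relation.ReflTransGen (fun u v => 1 ≤ f u v) y z := by
    by_contra hr
    set S : Finset V :=
      Finset.univ.filter (fun x => Relation.ReflTransGen (fun u v => 1 ≤ f u v) y x) with hS
    have hyS : y ∈ S := by simp [hS]; exact Relation.ReflTransGen.refl
    have hzS : z ∉ S := by simp [hS]; exact hr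
    have hcut := flowValue_eq_cut hf S hyS hzS
    have hzero : ∀ u ∈ S, ∀ v ∈ Sᶜ, f u v = 0 := by
      intro u hu v hv
      by_contra hfuv
      have h1 : 1 ≤ f u v := Nat.one_le_iff_ne_zero.2 hfuv
      have hu' : Relation.ReflTransGen (fun u v => 1 ≤ f u v) y u := by simpa [hS] using hu
      have hvS : v ∈ S := by simp [hS]; exact hu'.tail h1
      rw [Finset.mem_compl] at hv
      exact hv hvS
    have hle : flowValue f y ≤ 0 := by
      rw [hcut]
      refine Finset.sum_nonpos fun u hu => Finset.sum_nonpos fun v hv => ?_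
      rw [hzero u hu v hv]
      simp
    omega
  exact exists_nodup_chain' hreach hyz

lemma zip_map_self {α β : Type*} (g : α → β) : ∀ l : List α,
    l.zip (l.map g) = l.map (fun a => (a, g a))
  | [] => rfl
  | a :: t => by simp [zip_map_self g t]

lemma filterMap_if_eq_filter {α : Type*} (g : α → Bool) (l : List α) :
    l.filterMap (fun a => if g a then some a else none) = l.filter g := by
  induction l with
  | nil => rfl
  | cons a t ih => by_cases h : g a <;> simp [h, ih]

lemma exists_augPath {N : Network V} {y z : V} {f : V → V → ℕ}
    (hf : IsFlow N y z f) (hyz : y ≠ z) (hlt : flowValue f y < (maxFlowValue N y z : ℤ)) :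
    ∃ p d, IsAugPath N y z f p d := by
  classical
  set r : V → V → Prop := fun u v => f u v < N.c u v ∨ 1 ≤ f v u with hr
  have hreach : Relation.ReflTransGen r y z := by
    by_contra hnr
    set S := Finset.univ.filter (fun x => Relation.ReflTransGen r y x) with hS
    have hyS : y ∈ S := by simp [hS]; exact Relation.ReflTransGen.refl
    have hzS : z ∉ S := by simp [hS]; exact hnr
    obtain ⟨g, hg, hgv⟩ := exists_isMaxFlow N y z
    have hcutg := flowValue_eq_cut hg S hyS hzS
    have hcutf := flowValue_eq_cut hf S hyS hzS
    have hpt : ∀ u ∈ S, ∀ v ∈ Sᶜ, ((g u v : ℤ) - g v u) ≤ (f u v : ℤ) - f v u := by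
      intro u hu v hv
      have hnr' : ¬ r u v := by
        intro hruv
        have hu' : Relation.ReflTransGen r y u := by simpa [hS] using hu
        have hvS : v ∈ S := by simp [hS]; exact hu'.tail hruv
        rw [Finset.mem_compl] at hv
        exact hv hvS
      rw [hr] at hnr'
      push_neg at hnr'
      have h1 : f u v = N.c u v := le_antisymm (hf.1 u v) (by omega)
      have h2 : f v u = 0 := by omega
      have h3 : g u v ≤ N.c u v := hg.1 u v
      rw [h1, h2]
      push_cast
      have h4 : (0:ℤ) ≤ (g v u : ℤ) := by positivity
      have h3' : (g u v : ℤ) ≤ (N.c u v : ℤ) := by exact_mod_cast h3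
      linarith
    have hcontra : (maxFlowValue N y z : ℤ) ≤ flowValue f y := by
      rw [← hgv, hcutg, hcutf]
      exact Finset.sum_le_sum fun u hu => Finset.sum_le_sum fun v hv => hpt u hu v hv
    omega
  obtain ⟨p, hlen, hnd, hh, hl, hc⟩ := exists_nodup_chain' hreach hyz
  set gb : V × V → Bool := fun a => decide (f a.1 a.2 < N.c a.1 a.2) with hgb
  have hzipmap : (pathArcs p).zip ((pathArcs p).map gb) =
      (pathArcs p).map (fun b => (b, gb b)) := by
    exact zip_map_self gb (pathArcs p)
  have hfa : forwardArcs p ((pathArcs p).map gb) = (pathArcs p).filter gb := by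
    show ((pathArcs p).zip ((pathArcs p).map gb)).filterMap _ = _
    rw [hzipmap, List.filterMap_map]
    exact filterMap_if_eq_filter gb (pathArcs p)
  have hba : ∀ a ∈ backwardArcs p ((pathArcs p).map gb),
      ∃ b ∈ pathArcs p, gb b = false ∧ a = (b.2, b.1) := by
    intro a ha
    have : a ∈ ((pathArcs p).map (fun b => (b, gb b))).filterMap
        (fun e => if e.2 then none else some (e.1.2, e.1.1)) := by
      rw [← hzipmap]; exact ha
    rw [List.filterMap_map, List.mem_filterMap] at this
    obtain ⟨b, hb, hbeq⟩ := this
    by_cases hgbb : gb b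
    · simp [hgbb] at hbeq
    · simp only [Function.comp] at hbeq
      rw [Bool.not_eq_true] at hgbb
      refine ⟨b, hb, hgbb, ?_⟩
      simp [hgbb] at hbeq
      exact hbeq.symm
  refine ⟨p, (pathArcs p).map gb, ⟨hlen, hnd, hh, hl, ?_⟩, ?_, ?_⟩
  · rw [List.length_map]
    have h5 : (pathArcs p).length = p.length - 1 := by
      rw [pathArcs, List.length_zip, List.length_tail]
      omega
    omega
  · intro a ha
    rw [hfa, List.mem_filter] at ha
    have := ha.2
    rw [hgb] at this
    exact of_decide_eq_true this
  · intro a ha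
    obtain ⟨b, hb, hgbb, rfl⟩ := hba a ha
    have hrb : r b.1 b.2 := chain'_iff_pathArcs.1 hc b hb
    have : ¬ (f b.1 b.2 < N.c b.1 b.2) := by
      rw [hgb] at hgbb
      simpa using of_decide_eq_false hgbb
    rw [hr] at hrb
    rcases hrb with h | h
    · exact absurd h this
    · exact h

lemma count_nodup_ite {α : Type*} [BEq α] [LawfulBEq α] {l : List α} (h : l.Nodup) (a : α) :
    l.count a = if a ∈ l then 1 else 0 := by
  induction l with
  | nil => simp
  | cons b t ih =>
    rw [List.count_cons, List.nodup_cons] at *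
    by_cases hab : a = b
    · subst hab
      simp [h.1, ih h.2]
    · simp [hab, Ne.symm hab, ih h.2, List.mem_cons]

lemma sum_mem_ind_le_one {l : List (V × V)}
    (hl : ∀ u u' x : V, (x, u) ∈ l → (x, u') ∈ l → u = u') (x : V) :
    (∑ u, if (x, u) ∈ l then (1 : ℤ) else 0) ≤ 1 := by
  by_cases hex : ∃ u0, (x, u0) ∈ l
  · obtain ⟨u0, hu0⟩ := hex
    have hle : ∀ u : V, (if (x, u) ∈ l then (1 : ℤ) else 0) ≤ if u = u0 then 1 else 0 := by
      intro u
      by_cases hu : (x, u) ∈ l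
      · rw [if_pos hu, if_pos (hl u u0 x hu hu0)]
      · rw [if_neg hu]
        split <;> norm_num
    calc (∑ u, if (x, u) ∈ l then (1 : ℤ) else 0) ≤ ∑ u, if u = u0 then (1:ℤ) else 0 :=
          Finset.sum_le_sum fun u _ => hle u
      _ = 1 := by simp
  · push_neg at hex
    have : ∀ u : V, (if (x, u) ∈ l then (1 : ℤ) else 0) = 0 := fun u => if_neg (hex u)
    simp only [this, Finset.sum_const_zero]
    norm_num

lemma augment {N : Network V} {y z : V} {f : V → V → ℕ} {p : List V} {d : List Bool}
    (hf : IsFlow N y z f) (hyz : y ≠ z) (hap : IsAugPath N y z f p d) :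
    ∃ f' : V → V → ℕ, IsFlow N y z f' ∧ flowValue f' y = flowValue f y + 1 ∧
      ∀ x : V, (∑ u, (f' x u : ℤ)) ≤ (∑ u, (f x u : ℤ)) + 1 := by
  obtain ⟨⟨hlen, hnd, hh, hl, hdlen⟩, hfa, hba⟩ := hap
  have hFnd : (forwardArcs p d).Nodup := (forwardArcs_sublist p d).nodup (pathArcs_nodup hnd)
  have hBnd : (backwardArcs p d).Nodup := by
    have := (backwardArcs_swap_sublist p d).nodup (pathArcs_nodup hnd)
    exact this.of_map Prod.swap
  have hdisj : ∀ u v : V, (u, v) ∈ forwardArcs p d → (u, v) ∈ backwardArcs p d → False := by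
    intro u v h1 h2
    exact pathArcs_no_reverse hnd u v (mem_pathArcs_of_mem_forwardArcs h1)
      (mem_pathArcs_of_mem_backwardArcs h2)
  have hchi : ∀ u v : V, chiGen p d u v =
      (if (u, v) ∈ forwardArcs p d then (1 : ℤ) else 0) -
      (if (u, v) ∈ backwardArcs p d then (1 : ℤ) else 0) := by
    intro u v
    rw [chiGen]
    simp only [count_nodup_ite hFnd, count_nodup_ite hBnd]
    split <;> split <;> norm_num
  set f' : V → V → ℕ := fun u v => ((f u v : ℤ) + chiGen p d u v).toNat with hf'
  have hcast : ∀ u v : V, (f' u v : ℤ) = (f u v : ℤ) + chiGen p d u v := by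
    intro u v
    rw [hf']
    simp only
    rw [Int.toNat_of_nonneg]
    rw [hchi]
    by_cases hB : (u, v) ∈ backwardArcs p d
    · have hge : 1 ≤ f u v := hba (u, v) hB
      have hnF : (u, v) ∉ forwardArcs p d := fun hF => hdisj u v hF hB
      rw [if_neg hnF, if_pos hB]
      have : (1 : ℤ) ≤ (f u v : ℤ) := by exact_mod_cast hge
      linarith
    · rw [if_neg hB]
      split <;> positivity
  have hdiv := fun x => div_chiGen p d (by omega) x
  refine ⟨f', ⟨?_, ?_⟩, ?_, ?_⟩
  · intro u v
    have hc : (f' u v : ℤ) ≤ (N.c u v : ℤ) := by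
      rw [hcast, hchi]
      by_cases hF : (u, v) ∈ forwardArcs p d
      · have hlt : f u v < N.c u v := hfa (u, v) hF
        have hnB : (u, v) ∉ backwardArcs p d := fun hB => hdisj u v hF hB
        rw [if_pos hF, if_neg hnB]
        have : (f u v : ℤ) < (N.c u v : ℤ) := by exact_mod_cast hlt
        linarith
      · rw [if_neg hF]
        have : (f u v : ℤ) ≤ (N.c u v : ℤ) := by exact_mod_cast hf.1 u v
        split <;> linarith
    exact_mod_cast hc
  · intro x hx1 hx2
    have hcons := hf.2 x hx1 hx2
    have hconsZ : (∑ u, (f u x : ℤ)) = ∑ u, (f x u : ℤ) := by exact_mod_cast hcons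
    have hx := hdiv x
    rw [hh, hl] at hx
    rw [if_neg (by simpa using (Ne.symm hx1)), if_neg (by simpa using (Ne.symm hx2))] at hx
    have : (∑ u, (f' u x : ℤ)) = ∑ u, (f' x u : ℤ) := by
      simp only [hcast]
      rw [Finset.sum_add_distrib, Finset.sum_add_distrib]
      linarith
    exact_mod_cast this
  · rw [flowValue, flowValue]
    simp only [hcast]
    rw [Finset.sum_add_distrib, Finset.sum_add_distrib]
    have hy := hdiv y
    rw [hh, hl] at hy
    rw [if_pos rfl, if_neg (by simpa using (Ne.symm hyz))] at hy
    linarith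
  · intro x
    simp only [hcast]
    rw [Finset.sum_add_distrib]
    have hle : (∑ u, chiGen p d x u) ≤ 1 := by
      have h1 : ∀ u : V, chiGen p d x u ≤ if (x, u) ∈ forwardArcs p d then (1:ℤ) else 0 := by
        intro u
        rw [hchi]
        split <;> norm_num <;> positivity
      calc (∑ u, chiGen p d x u) ≤ ∑ u, if (x, u) ∈ forwardArcs p d then (1:ℤ) else 0 :=
            Finset.sum_le_sum fun u _ => h1 u
        _ ≤ 1 := sum_mem_ind_le_one (fun u u' x h1 h2 =>
            pathArcs_fst_unique hnd x u u' (mem_pathArcs_of_mem_forwardArcs h1)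
              (mem_pathArcs_of_mem_forwardArcs h2)) x
    linarith

lemma exists_out_arc : ∀ {p : List V} (x : V), x ∈ p → p.getLast? ≠ some x →
    ∃ u, (x, u) ∈ pathArcs p
  | [], x, hx, _ => absurd hx List.not_mem_nil
  | [a], x, hx, hne => by
      simp only [List.mem_singleton] at hx
      exact absurd (by rw [hx]; rfl) hne
  | a :: b :: t, x, hx, hne => by
      by_cases hxa : x = a
      · exact ⟨b, by rw [hxa, pathArcs_cons_cons]; exact List.mem_cons_self⟩
      · have hx' : x ∈ b :: t := by
          rcases List.mem_cons.1 hx with h | h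
          · exact absurd h hxa
          · exact h
        obtain ⟨u, hu⟩ := exists_out_arc x hx' (by rwa [List.getLast?_cons_cons] at hne)
        exact ⟨u, by rw [pathArcs_cons_cons]; exact List.mem_cons_of_mem _ hu⟩

lemma seqFlow_nil (u v : V) : seqFlow ([] : List (List V)) u v = 0 := rfl

lemma seqFlow_cons (p : List V) (γ : List (List V)) (u v : V) :
    seqFlow (p :: γ) u v = seqFlow γ u v + if (u, v) ∈ pathArcs p then 1 else 0 := by
  rw [seqFlow, seqFlow, List.countP_cons]
  simp [decide_eq_true_eq]

lemma chi_eq_ind {p : List V} (hnd : p.Nodup) (u v : V) :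
    chi p u v = if (u, v) ∈ pathArcs p then 1 else 0 := by
  rw [chi, count_nodup_ite (pathArcs_nodup hnd)]

lemma flow_decompose {N : Network V} {y z : V} (hyz : y ≠ z) :
    ∀ M : ℕ, ∀ f : V → V → ℕ, (∑ u, ∑ v, f u v) ≤ M → IsFlow N y z f →
    ∀ k : ℕ, flowValue f y = (k : ℤ) →
    ∃ γ : List (List V), (∀ p ∈ γ, IsPath N y z p) ∧ γ.length = k ∧
      ∀ u v, seqFlow γ u v ≤ f u v := by
  intro M
  induction M with
  | zero =>
    intro f hM f_flow k hk
    have hf0 : ∀ u v, f u v = 0 := by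
      intro u v
      have h1 : ∑ u : V, ∑ v : V, f u v = 0 := Nat.le_zero.1 hM
      have h2 := (Finset.sum_eq_zero_iff.1 h1) u (Finset.mem_univ u)
      exact (Finset.sum_eq_zero_iff.1 h2) v (Finset.mem_univ v)
    have hv0 : flowValue f y = 0 := by simp [flowValue, hf0]
    have hk0 : k = 0 := by
      rw [hv0] at hk
      exact_mod_cast hk.symm
    exact ⟨[], by simp, by simp [hk0], fun u v => by rw [seqFlow_nil]; exact Nat.zero_le _⟩
  | succ M ih =>
    intro f hM f_flow k hk
    rcases Nat.eq_zero_or_pos k with rfl | hkpos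
    · exact ⟨[], by simp, rfl, fun u v => by rw [seqFlow_nil]; exact Nat.zero_le _⟩
    · have hpos : 0 < flowValue f y := by rw [hk]; exact_mod_cast hkpos
      obtain ⟨p, hlen, hnd, hh, hl, hc⟩ := exists_pos_path f_flow hyz hpos
      have harc1 : ∀ a ∈ pathArcs p, 1 ≤ f a.1 a.2 := chain'_iff_pathArcs.1 hc
      have hpath : IsPath N y z p :=
        ⟨hlen, hnd, hh, hl, hc.imp fun {a b} hab => le_trans hab (f_flow.1 a b)⟩
      set f1 : V → V → ℕ := fun u v => f u v - (if (u, v) ∈ pathArcs p then 1 else 0)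
        with hf1
      have hf1b : ∀ u v : V, f1 u v = f u v - (if (u, v) ∈ pathArcs p then 1 else 0) :=
        fun u v => rfl
      have hcast : ∀ u v, (f1 u v : ℤ) = (f u v : ℤ) - (chi p u v : ℤ) := by
        intro u v
        rw [hf1b u v, chi_eq_ind hnd]
        by_cases hm : (u, v) ∈ pathArcs p
        · simp only [if_pos hm]
          have h2 : 1 ≤ f u v := harc1 (u, v) hm
          omega
        · simp only [if_neg hm]
          omega
      have hdiv := fun x => div_chi (V := V) p x
      have hf1flow : IsFlow N y z f1 := by
        constructor
        · intro u v
          exact le_trans (Nat.sub_le _ _) (f_flow.1 u v)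
        · intro x hx1 hx2
          have hcons := f_flow.2 x hx1 hx2
          have hconsZ : (∑ u, (f u x : ℤ)) = ∑ u, (f x u : ℤ) := by exact_mod_cast hcons
          have hx := hdiv x
          rw [hh, hl] at hx
          rw [if_neg (by simpa using (Ne.symm hx1)), if_neg (by simpa using (Ne.symm hx2))]
            at hx
          have : (∑ u, (f1 u x : ℤ)) = ∑ u, (f1 x u : ℤ) := by
            simp only [hcast]
            rw [Finset.sum_sub_distrib, Finset.sum_sub_distrib]
            linarith
          exact_mod_cast this
      have hval1 : flowValue f1 y = ((k - 1 : ℕ) : ℤ) := by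
        rw [flowValue]
        simp only [hcast]
        rw [Finset.sum_sub_distrib, Finset.sum_sub_distrib]
        have hy := hdiv y
        rw [hh, hl] at hy
        rw [if_pos rfl, if_neg (by simpa using (Ne.symm hyz))] at hy
        have hkk : ((k - 1 : ℕ) : ℤ) = (k : ℤ) - 1 := by
          push_cast [Nat.cast_sub hkpos]
          ring
        rw [hkk]
        have : flowValue f y = (k : ℤ) := hk
        rw [flowValue] at this
        linarith
      -- mass decreases
      obtain ⟨b, t, rfl⟩ : ∃ b t, p = y :: b :: t := by
        match p, hh, hlen with
        | a :: b :: t, hh, _ =>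
          simp only [List.head?_cons, Option.some.injEq] at hh
          exact ⟨b, t, by rw [hh]⟩
      have harcy : ((y : V), b) ∈ pathArcs (y :: b :: t) := by
        rw [pathArcs_cons_cons]
        exact List.mem_cons_self
      have hmass : (∑ u, ∑ v, f1 u v) ≤ M := by
        have hrow : ∀ u, (∑ v, f1 u v) ≤ ∑ v, f u v := fun u =>
          Finset.sum_le_sum fun v _ => Nat.sub_le _ _
        have hstrict : (∑ v, f1 y v) < ∑ v, f y v := by
          apply Finset.sum_lt_sum (fun v _ => Nat.sub_le _ _)
          refine ⟨b, Finset.mem_univ b, ?_⟩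
          rw [if_pos harcy]
          have h2 : 1 ≤ f y b := harc1 (y, b) harcy
          omega
        have : (∑ u, ∑ v, f1 u v) < ∑ u, ∑ v, f u v := by
          apply Finset.sum_lt_sum (fun u _ => hrow u)
          exact ⟨y, Finset.mem_univ y, hstrict⟩
        omega
      obtain ⟨γ, hγpaths, hγlen, hγle⟩ := ih f1 hmass hf1flow (k - 1) hval1
      refine ⟨(y :: b :: t) :: γ, ?_, ?_, ?_⟩
      · intro q hq
        rcases List.mem_cons.1 hq with rfl | hq
        · exact hpath
        · exact hγpaths q hq
      · simp only [List.length_cons, hγlen]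
        omega
      · intro u v
        rw [seqFlow_cons]
        have h1 := hγle u v
        rw [hf1b u v] at h1
        by_cases hm : (u, v) ∈ pathArcs (y :: b :: t)
        · rw [if_pos hm] at h1 ⊢
          have h2 : 1 ≤ f u v := harc1 (u, v) hm
          omega
        · rw [if_neg hm] at h1 ⊢
          omega

lemma seqFlow_div {N : Network V} {y z : V} :
    ∀ γ : List (List V), (∀ p ∈ γ, IsPath N y z p) → ∀ x : V,
    ((∑ u, (seqFlow γ x u : ℤ)) - ∑ u, (seqFlow γ u x : ℤ)) =
      (γ.length : ℤ) * ((if x = y then 1 else 0) - (if x = z then 1 else 0))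
  | [], _, x => by simp [seqFlow_nil]
  | p :: γ, hps, x => by
      have hp := hps p (List.mem_cons_self)
      have IH := seqFlow_div γ (fun q hq => hps q (List.mem_cons_of_mem _ hq)) x
      obtain ⟨hlen, hnd, hh, hl, _⟩ := hp
      have hcons : ∀ u v : V, (seqFlow (p :: γ) u v : ℤ) =
          (seqFlow γ u v : ℤ) + (chi p u v : ℤ) := by
        intro u v
        rw [seqFlow_cons, chi_eq_ind hnd]
        push_cast
        split <;> norm_num
      simp only [hcons]
      rw [Finset.sum_add_distrib, Finset.sum_add_distrib]
      have hd := div_chi (V := V) p x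
      rw [hh, hl] at hd
      have e1 : ((some y : Option V) = some x) ↔ (x = y) := by simp [eq_comm]
      have e2 : ((some z : Option V) = some x) ↔ (x = z) := by simp [eq_comm]
      simp only [e1, e2] at hd
      rw [List.length_cons]
      push_cast
      linear_combination hd + IH

lemma isPathSeq_le_maxFlowValue {N : Network V} {y z : V} {γ : List (List V)}
    (hyz : y ≠ z) (hγ : IsPathSeq N y z γ) : γ.length ≤ maxFlowValue N y z := by
  apply le_maxFlowValue (f := seqFlow γ) (N := N) (z := z)
  · constructor
    · exact hγ.2
    · intro x hx1 hx2
      have := seqFlow_div γ hγ.1 x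
      rw [if_neg hx1, if_neg hx2] at this
      simp only [mul_zero, sub_zero] at this
      have h0 : (∑ u, (seqFlow γ x u : ℤ)) = ∑ u, (seqFlow γ u x : ℤ) := by linarith
      exact_mod_cast h0.symm
  · have := seqFlow_div γ hγ.1 y
    rw [if_pos rfl, if_neg hyz] at this
    rw [flowValue]
    linarith

lemma empty_isPathSeq (N : Network V) (y z : V) : IsPathSeq N y z [] := by
  constructor
  · intro p hp
    exact absurd hp List.not_mem_nil
  · intro u v
    simp

lemma seqSet_nonempty (N : Network V) (y z : V) :
    {m : ℕ | ∃ γ : List (List V), IsPathSeq N y z γ ∧ γ.length = m}.Nonempty :=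
  ⟨0, [], empty_isPathSeq N y z, rfl⟩

lemma seqSet_bddAbove {N : Network V} {y z : V} (hyz : y ≠ z) :
    BddAbove {m : ℕ | ∃ γ : List (List V), IsPathSeq N y z γ ∧ γ.length = m} := by
  refine ⟨maxFlowValue N y z, fun m hm => ?_⟩
  obtain ⟨γ, hγ, rfl⟩ := hm
  exact isPathSeq_le_maxFlowValue hyz hγ

lemma le_maxSeqLen {N : Network V} {y z : V} {γ : List (List V)} (hyz : y ≠ z)
    (hγ : IsPathSeq N y z γ) : γ.length ≤ maxSeqLen N y z :=
  le_csSup (seqSet_bddAbove hyz) ⟨γ, hγ, rfl⟩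

lemma maxSeqLen_eq_maxFlowValue {N : Network V} {y z : V} (hyz : y ≠ z) :
    maxSeqLen N y z = maxFlowValue N y z := by
  apply _root_.le_antisymm
  · exact csSup_le (seqSet_nonempty N y z) fun m hm => by
      obtain ⟨γ, hγ, rfl⟩ := hm
      exact isPathSeq_le_maxFlowValue hyz hγ
  · obtain ⟨f, hf, hfv⟩ := exists_isMaxFlow N y z
    obtain ⟨γ, hγpaths, hγlen, hγle⟩ :=
      flow_decompose hyz (∑ u, ∑ v, f u v) f le_rfl hf (maxFlowValue N y z) hfv
    have hps : IsPathSeq N y z γ :=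
      ⟨hγpaths, fun u v => le_trans (hγle u v) (hf.1 u v)⟩
    rw [← hγlen]
    exact le_maxSeqLen hyz hps

lemma exists_maxSeq {N : Network V} {y z : V} (hyz : y ≠ z) :
    (MaxSeqs N y z).Nonempty := by
  have := Nat.sSup_mem (seqSet_nonempty N y z) (seqSet_bddAbove hyz)
  obtain ⟨γ, hγ, hlen⟩ := this
  exact ⟨γ, hγ, hlen⟩

lemma exists_lambdaX {N : Network V} {y z : V} (hyz : y ≠ z) (X : Finset V) :
    ∃ γ ∈ MaxSeqs N y z, lX X γ = lambdaX N y z X := by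
  obtain ⟨γ0, hγ0⟩ := exists_maxSeq (N := N) hyz
  have := Nat.sInf_mem (s := {n : ℕ | ∃ γ ∈ MaxSeqs N y z, lX X γ = n}) ⟨lX X γ0, γ0, hγ0, rfl⟩
  obtain ⟨γ, hγ, hl⟩ := this
  exact ⟨γ, hγ, hl⟩

lemma maxSeqLen_remove_ge {N : Network V} {y z : V} (hyz : y ≠ z) (X : Finset V) :
    (maxSeqLen N y z : ℤ) - (lambdaX N y z X : ℤ) ≤ (maxSeqLen (removeVerts N X) y z : ℤ) := by
  obtain ⟨γ, hγmax, hlX⟩ := exists_lambdaX hyz X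
  obtain ⟨hseq, hlen⟩ := hγmax
  set pred : List V → Bool := fun p => p.any fun x => decide (x ∈ X) with hpred
  set γ' := γ.filter (fun p => !pred p) with hγ'
  have hmemX : ∀ p ∈ γ', ∀ v ∈ p, v ∉ X := by
    intro p hp v hv
    have h1 := (List.mem_filter.1 hp).2
    rw [Bool.not_eq_true'] at h1  -- pred p = false
    rw [hpred] at h1
    simp only [List.any_eq_false, decide_eq_true_eq] at h1
    exact h1 v hv
  have hseq' : IsPathSeq (removeVerts N X) y z γ' := by
    constructor
    · intro p hp
      have hpγ : p ∈ γ := (List.mem_filter.1 hp).1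
      obtain ⟨h2, hnd, hh, hl, hc⟩ := hseq.1 p hpγ
      refine ⟨h2, hnd, hh, hl, ?_⟩
      rw [chain'_iff_pathArcs] at hc ⊢
      intro a ha
      have h1 := hc a ha
      have hu := (mem_of_mem_pathArcs ha).1
      have hv := List.mem_of_mem_tail (mem_of_mem_pathArcs ha).2
      have hcc : (removeVerts N X).c a.1 a.2 = N.c a.1 a.2 := by
        rw [removeVerts]
        simp only
        rw [if_neg]
        push_neg
        exact ⟨hmemX p hp a.1 hu, hmemX p hp a.2 hv⟩
      rw [hcc]
      exact h1
    · intro u v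
      by_cases hX : u ∈ X ∨ v ∈ X
      · have h0 : γ'.countP (fun p => decide ((u, v) ∈ pathArcs p)) = 0 := by
          rw [List.countP_eq_zero]
          intro p hp hmem
          rw [decide_eq_true_eq] at hmem
          rcases hX with hX | hX
          · exact hmemX p hp u (mem_of_mem_pathArcs hmem).1 hX
          · exact hmemX p hp v (List.mem_of_mem_tail (mem_of_mem_pathArcs hmem).2) hX
        rw [h0]
        exact Nat.zero_le _
      · have hcc : (removeVerts N X).c u v = N.c u v := by
          rw [removeVerts]
          simp only
          rw [if_neg hX]
        rw [hcc]
        exact le_trans (List.Sublist.countP_le (List.filter_sublist ..)) (hseq.2 u v)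
  have hlenf : γ'.length + lX X γ = γ.length := by
    rw [hγ', ← List.countP_eq_length_filter, lX, hpred]
    have h1 := List.length_eq_countP_add_countP (p := pred) (l := γ)
    have h2 : γ.countP (fun p => !pred p) = γ.countP (fun a => ¬ pred a) := by
      apply List.countP_congr
      intro a _
      simp
    rw [h2]
    simp only [hpred] at h1 ⊢
    omega
  have hle := le_maxSeqLen hyz hseq'
  rw [hlen, hlX] at hlenf
  omega

lemma phiDrop_le_lambdaX {N : Network V} {y z : V} (hyz : y ≠ z) (X : Finset V) :
    phiDrop N y z X ≤ (lambdaX N y z X : ℤ) := by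
  rw [phiDrop]
  have h1 := maxSeqLen_eq_maxFlowValue (N := N) (y := y) (z := z) hyz
  have h2 := maxSeqLen_eq_maxFlowValue (N := removeVerts N X) (y := y) (z := z) hyz
  have h3 := maxSeqLen_remove_ge (N := N) hyz X
  omega

lemma maxFlowValue_remove_self_left {N : Network V} {y z : V} (X : Finset V) (hy : y ∈ X) :
    maxFlowValue (removeVerts N X) y z = 0 := by
  apply Nat.le_zero.1
  apply csSup_le (maxFlow_set_nonempty _ y z)
  rintro m ⟨f, hf, hv⟩
  have h1 : ∀ u, f y u = 0 := by
    intro u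
    apply Nat.le_zero.1
    refine le_trans (hf.1 y u) ?_
    rw [removeVerts]
    simp [hy]
  have h2 : ∀ u, f u y = 0 := by
    intro u
    apply Nat.le_zero.1
    refine le_trans (hf.1 u y) ?_
    rw [removeVerts]
    simp [hy]
  have h0 : flowValue f y = 0 := by simp [flowValue, h1, h2]
  rw [h0] at hv
  exact_mod_cast Nat.le_zero.2 (by exact_mod_cast hv.symm)

lemma maxFlowValue_remove_self_right {N : Network V} {y z : V} {X : Finset V} (hyz : y ≠ z)
    (hz : z ∈ X) : maxFlowValue (removeVerts N X) y z = 0 := by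
  apply Nat.le_zero.1
  apply csSup_le (maxFlow_set_nonempty _ y z)
  rintro m ⟨f, hf, hv⟩
  have hcut := flowValue_eq_cut hf ({z} : Finset V)ᶜ
    (Finset.mem_compl.2 (by simp [hyz])) (by simp)
  have h1 : ∀ u, f u z = 0 := by
    intro u
    apply Nat.le_zero.1
    refine le_trans (hf.1 u z) ?_
    rw [removeVerts]
    simp [hz]
  have h2 : ∀ u, f z u = 0 := by
    intro u
    apply Nat.le_zero.1
    refine le_trans (hf.1 z u) ?_
    rw [removeVerts]
    simp [hz]
  have h0 : flowValue f y = 0 := by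
    rw [hcut, compl_compl]
    apply Finset.sum_eq_zero
    intro u _
    rw [Finset.sum_singleton, h1, h2]
    simp
  rw [h0] at hv
  exact_mod_cast Nat.le_zero.2 (by exact_mod_cast hv.symm)

lemma lambdaX_endpoint {N : Network V} {y z : V} (hyz : y ≠ z) (x : V)
    (hx : x = y ∨ x = z) : lambdaX N y z {x} = maxSeqLen N y z := by
  have hall : ∀ γ ∈ MaxSeqs N y z, lX {x} γ = γ.length := by
    intro γ hγ
    rw [lX, List.countP_eq_length]
    intro p hp
    obtain ⟨h2, hnd, hh, hl, _⟩ := hγ.1.1 p hp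
    have hxp : x ∈ p := by
      rcases hx with rfl | rfl
      · exact List.mem_of_mem_head? (by rw [hh]; rfl)
      · have hmem : x ∈ p.getLast? := by rw [hl]; rfl
        obtain ⟨hne, heq⟩ := List.mem_getLast?_eq_getLast hmem
        rw [heq]
        exact List.getLast_mem hne
    rw [List.any_eq_true]
    exact ⟨x, hxp, by simp⟩
  obtain ⟨γ, hγ, hlamx⟩ := exists_lambdaX hyz ({x} : Finset V)
  rw [← hlamx, hall γ hγ, hγ.2]

lemma lX_le_outflow {N : Network V} {y z x : V} (hxz : x ≠ z) :
    ∀ γ : List (List V), (∀ p ∈ γ, IsPath N y z p) →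
      lX {x} γ ≤ ∑ u, seqFlow γ x u
  | [], _ => by simp [lX, seqFlow_nil]
  | p :: γ, hps => by
      have IH := lX_le_outflow (y := y) (z := z) hxz γ
        (fun q hq => hps q (List.mem_cons_of_mem _ hq))
      obtain ⟨h2, hnd, hh, hl, _⟩ := hps p (List.mem_cons_self)
      rw [lX, List.countP_cons]
      have hsum : ∀ u : V, seqFlow (p :: γ) x u =
          seqFlow γ x u + if (x, u) ∈ pathArcs p then 1 else 0 :=
        fun u => seqFlow_cons p γ x u
      rw [Finset.sum_congr rfl fun u _ => hsum u, Finset.sum_add_distrib]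
      rw [lX] at IH
      by_cases hxp : x ∈ p
      · have hpred : (p.any fun v => decide (v ∈ ({x} : Finset V))) = true := by
          rw [List.any_eq_true]
          exact ⟨x, hxp, by simp⟩
        rw [if_pos hpred]
        obtain ⟨u0, hu0⟩ := exists_out_arc x hxp
          (by rw [hl]; simp; exact fun h => hxz h.symm)
        have h1 : 1 ≤ ∑ u, (if (x, u) ∈ pathArcs p then 1 else 0) := by
          have hone := Finset.single_le_sum
            (f := fun u => if (x, u) ∈ pathArcs p then (1 : ℕ) else 0)
            (fun u _ => Nat.zero_le _) (Finset.mem_univ u0)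
          simp only [if_pos hu0] at hone
          exact hone
        omega
      · have hpred : (p.any fun v => decide (v ∈ ({x} : Finset V))) = false := by
          rw [List.any_eq_false]
          intro v hv
          simp only [decide_eq_true_eq, Finset.mem_singleton]
          rintro rfl
          exact hxp hv
        rw [hpred]
        simp only [Bool.false_eq_true, if_false]
        omega

lemma phiDrop_eq_lambdaX_singleton {N : Network V} {y z x : V} (hyz : y ≠ z) :
    phiDrop N y z {x} = (lambdaX N y z {x} : ℤ) := by
  apply _root_.le_antisymm (phiDrop_le_lambdaX hyz {x})
  by_cases hx : x = y ∨ x = z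
  · have h0 : maxFlowValue (removeVerts N {x}) y z = 0 := by
      rcases hx with rfl | rfl
      · exact maxFlowValue_remove_self_left {x} (Finset.mem_singleton_self x)
      · exact maxFlowValue_remove_self_right hyz (Finset.mem_singleton_self x)
    rw [phiDrop, h0, lambdaX_endpoint hyz x hx, maxSeqLen_eq_maxFlowValue hyz]
    simp
  · push_neg at hx
    obtain ⟨hxy, hxz⟩ := hx
    obtain ⟨g, hg, hgv⟩ := exists_isMaxFlow (removeVerts N {x}) y z
    have hcle : ∀ u v, (removeVerts N {x}).c u v ≤ N.c u v := by
      intro u v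
      rw [removeVerts]
      simp only
      split
      · exact Nat.zero_le _
      · exact le_rfl
    have hgN : IsFlow N y z g := ⟨fun u v => (hg.1 u v).trans (hcle u v), hg.2⟩
    have hgx : ∀ u, g x u = 0 := by
      intro u
      apply Nat.le_zero.1
      refine le_trans (hg.1 x u) ?_
      rw [removeVerts]
      simp
    have hφx_le : maxFlowValue (removeVerts N {x}) y z ≤ maxFlowValue N y z :=
      le_maxFlowValue hgN hgv
    have pump : ∀ k : ℕ, ∀ g0 : V → V → ℕ, IsFlow N y z g0 →
        flowValue g0 y = (maxFlowValue N y z : ℤ) - k →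
        (∑ u, (g0 x u : ℤ)) + k ≤
          (maxFlowValue N y z : ℤ) - (maxFlowValue (removeVerts N {x}) y z : ℤ) →
        ∃ f, IsMaxFlow N y z f ∧ (∑ u, (f x u : ℤ)) ≤
          (maxFlowValue N y z : ℤ) - (maxFlowValue (removeVerts N {x}) y z : ℤ) := by
      intro k
      induction k with
      | zero =>
        intro g0 h1 h2 h3
        refine ⟨g0, ⟨h1, by rw [h2]; push_cast; ring⟩, by push_cast at h3; linarith⟩
      | succ k ih =>
        intro g0 h1 h2 h3
        have hlt : flowValue g0 y < (maxFlowValue N y z : ℤ) := by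
          rw [h2]
          push_cast
          linarith
        obtain ⟨p, d, hap⟩ := exists_augPath h1 hyz hlt
        obtain ⟨g1, hg1, hg1v, hg1out⟩ := augment h1 hyz hap
        apply ih g1 hg1
        · rw [hg1v, h2]
          push_cast
          ring
        · have h4 := hg1out x
          push_cast at h3 ⊢
          linarith
    obtain ⟨f, hf, hfout⟩ := pump
      (maxFlowValue N y z - maxFlowValue (removeVerts N {x}) y z) g hgN
      (by rw [hgv]; push_cast [Nat.cast_sub hφx_le]; ring)
      (by
        have hgsum : (∑ u, (g x u : ℤ)) = 0 := by simp [hgx]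
        rw [hgsum]
        push_cast [Nat.cast_sub hφx_le]
        linarith)
    obtain ⟨γ, hγp, hγlen, hγle⟩ :=
      flow_decompose hyz (∑ u, ∑ v, f u v) f le_rfl hf.1 (maxFlowValue N y z) hf.2
    have hγseq : IsPathSeq N y z γ := ⟨hγp, fun u v => (hγle u v).trans (hf.1.1 u v)⟩
    have hγmax : γ ∈ MaxSeqs N y z := ⟨hγseq, by rw [hγlen, maxSeqLen_eq_maxFlowValue hyz]⟩
    have hlam_le : lambdaX N y z {x} ≤ lX {x} γ := Nat.sInf_le ⟨γ, hγmax, rfl⟩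
    have hcount : lX {x} γ ≤ ∑ u, seqFlow γ x u := lX_le_outflow hxz γ hγp
    have hseqle : (∑ u, seqFlow γ x u) ≤ ∑ u, f x u :=
      Finset.sum_le_sum fun u _ => hγle x u
    have hfinal : (lX {x} γ : ℤ) ≤
        (maxFlowValue N y z : ℤ) - (maxFlowValue (removeVerts N {x}) y z : ℤ) := by
      have hc1 : (lX {x} γ : ℤ) ≤ (∑ u, f x u : ℕ) := by exact_mod_cast hcount.trans hseqle
      have hc2 : ((∑ u, f x u : ℕ) : ℤ) = ∑ u, (f x u : ℤ) := by push_cast; rfl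
      rw [hc2] at hc1
      linarith
    rw [phiDrop]
    have : (lambdaX N y z {x} : ℤ) ≤ (lX {x} γ : ℤ) := by exact_mod_cast hlam_le
    linarith

-- INSERT_HERE

end NetFlow

/-- the full flow vitality and full flow betweenness group centrality
measures satisfy `φ^N(X) ≤ λ^N(X)`, with equality on singletons. -/
theorem phiGC_le_lambdaGC {V : Type*} [Fintype V] [DecidableEq V]
    (hV : 2 ≤ Fintype.card V) (N : Network V) (X : Finset V) :
    NetFlow.phiGC N X ≤ NetFlow.lambdaGC N X ∧
      ∀ x : V, NetFlow.phiGC N {x} = NetFlow.lambdaGC N {x} := by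
  constructor
  · unfold NetFlow.phiGC NetFlow.lambdaGC
    apply Finset.sum_le_sum
    intro a ha
    rw [Finset.mem_filter] at ha
    obtain ⟨-, hyz, hpos⟩ := ha
    have h := NetFlow.phiDrop_le_lambdaX (N := N) hyz X
    gcongr
    exact_mod_cast h
  · intro x
    unfold NetFlow.phiGC NetFlow.lambdaGC
    apply Finset.sum_congr rfl
    intro a ha
    rw [Finset.mem_filter] at ha
    obtain ⟨-, hyz, hpos⟩ := ha
    have h := NetFlow.phiDrop_eq_lambdaX_singleton (N := N) (x := x) hyz
    have h2 : (NetFlow.phiDrop N a.1 a.2 {x} : ℝ) = ((NetFlow.lambdaX N a.1 a.2 {x} : ℕ) : ℝ) := by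
      exact_mod_cast h
    rw [h2]
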